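/- Let T be a monad on a category C. The following are equivalent: (i) for every T-module (M,r), the T-linear morphism r : (T(M),μ_M) → (M,r) admits a T-linear section; (ii) every T-linear morphism whose underlying morphism in C has a section admits a T-linear section; (iii) every T-module is a T-linear retract of a free T-module (T(X),μ_X). -/

import Mathlib

open CategoryTheory

section Aux

variable {C : Type*} [Category C] {T : Monad C}

private lemma aux_i_of_iii (M : T.Algebra)
    (h : ∃ (X : C) (p : T.free.obj X ⟶ M) (j : M ⟶ T.free.obj X), j ≫ p = 𝟙 M) :
    ∃ σ : M.A ⟶ T.obj M.A,
      M.a ≫ σ = T.map σ ≫ T.μ.app M.A ∧ σ ≫ M.a = 𝟙 M.A := by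
  obtain ⟨X, p, j, hjp⟩ := h
  have hj : T.map j.f ≫ T.μ.app X = M.a ≫ j.f := j.h
  have hp : T.map p.f ≫ M.a = T.μ.app X ≫ p.f := p.h
  have hjp' : j.f ≫ p.f = 𝟙 M.A := congrArg Monad.Algebra.Hom.f hjp
  obtain ⟨jf, pf, hj, hp, hjp'⟩ : ∃ (jf : M.A ⟶ T.obj X) (pf : T.obj X ⟶ M.A),
      T.map jf ≫ T.μ.app X = M.a ≫ jf ∧ T.map pf ≫ M.a = T.μ.app X ≫ pf ∧
        jf ≫ pf = 𝟙 M.A := ⟨j.f, p.f, hj, hp, hjp'⟩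
  refine ⟨jf ≫ T.map (T.η.app X) ≫ T.map pf, ?_, ?_⟩
  · have nat1 : T.μ.app X ≫ T.map (T.η.app X) =
        T.map (T.map (T.η.app X)) ≫ T.μ.app (T.obj X) := by
      simpa using (T.μ.naturality (T.η.app X)).symm
    have nat2 : T.μ.app (T.obj X) ≫ T.map pf =
        T.map (T.map pf) ≫ T.μ.app M.A := by
      simpa using (T.μ.naturality pf).symm
    calc M.a ≫ jf ≫ T.map (T.η.app X) ≫ T.map pf
        = (T.map jf ≫ T.μ.app X) ≫ T.map (T.η.app X) ≫ T.map pf := by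
          rw [hj]; simp
      _ = T.map jf ≫ (T.μ.app X ≫ T.map (T.η.app X)) ≫ T.map pf := by simp
      _ = T.map jf ≫ T.map (T.map (T.η.app X)) ≫ T.μ.app (T.obj X) ≫ T.map pf := by
          rw [nat1]; simp
      _ = T.map jf ≫ T.map (T.map (T.η.app X)) ≫ T.map (T.map pf) ≫ T.μ.app M.A := by
          rw [nat2]
      _ = T.map (jf ≫ T.map (T.η.app X) ≫ T.map pf) ≫ T.μ.app M.A := by
          simp [Functor.map_comp]
  · calc (jf ≫ T.map (T.η.app X) ≫ T.map pf) ≫ M.a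
        = jf ≫ T.map (T.η.app X) ≫ (T.map pf ≫ M.a) := by simp
      _ = jf ≫ T.map (T.η.app X) ≫ T.μ.app X ≫ pf := by rw [hp]
      _ = jf ≫ (T.map (T.η.app X) ≫ T.μ.app X) ≫ pf := by simp
      _ = jf ≫ pf := by rw [T.right_unit]; simp
      _ = 𝟙 M.A := hjp'

end Aux

/-- For a monad `T` on a category `C`, the following are
equivalent (a monad satisfying them is called semisimple):
(i) for every `T`-module `(M,r)`, the `T`-linear morphism `r : (T M,μ_M) ⟶ (M,r)`
admits a `T`-linear section;
(ii) every `T`-linear morphism whose underlying morphism has a section in `C`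
admits a `T`-linear section;
(iii) every `T`-module is a `T`-linear retract of a free `T`-module. -/
theorem stmt16 {C : Type*} [Category C] (T : Monad C) :
    ((∀ M : T.Algebra, ∃ σ : M.A ⟶ T.obj M.A,
        M.a ≫ σ = T.map σ ≫ T.μ.app M.A ∧ σ ≫ M.a = 𝟙 M.A) ↔
      (∀ (M N : T.Algebra) (f : M ⟶ N),
        (∃ g : N.A ⟶ M.A, g ≫ f.f = 𝟙 N.A) → ∃ g' : N ⟶ M, g' ≫ f = 𝟙 N)) ∧
    ((∀ M : T.Algebra, ∃ σ : M.A ⟶ T.obj M.A,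
        M.a ≫ σ = T.map σ ≫ T.μ.app M.A ∧ σ ≫ M.a = 𝟙 M.A) ↔
      (∀ M : T.Algebra, ∃ (X : C) (p : T.free.obj X ⟶ M) (j : M ⟶ T.free.obj X),
        j ≫ p = 𝟙 M)) := by
  constructor
  · constructor
    · -- (i) → (ii)
      rintro h M N f ⟨g, hg⟩
      obtain ⟨σ, hσ1, hσ2⟩ := h N
      have hf : T.map f.f ≫ N.a = M.a ≫ f.f := f.h
      refine ⟨⟨σ ≫ T.map g ≫ M.a, ?_⟩, ?_⟩
      · -- linearity
        have nat : T.μ.app N.A ≫ T.map g = T.map (T.map g) ≫ T.μ.app M.A := by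
          simpa using (T.μ.naturality g).symm
        calc T.map (σ ≫ T.map g ≫ M.a) ≫ M.a
            = T.map σ ≫ T.map (T.map g) ≫ T.map M.a ≫ M.a := by
              simp [Functor.map_comp]
          _ = T.map σ ≫ T.map (T.map g) ≫ T.μ.app M.A ≫ M.a := by
              rw [← M.assoc]
          _ = T.map σ ≫ (T.map (T.map g) ≫ T.μ.app M.A) ≫ M.a := by simp
          _ = T.map σ ≫ (T.μ.app N.A ≫ T.map g) ≫ M.a := by rw [nat]
          _ = (T.map σ ≫ T.μ.app N.A) ≫ T.map g ≫ M.a := by simp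
          _ = N.a ≫ σ ≫ T.map g ≫ M.a := by rw [← hσ1]; simp
      · ext
        show (σ ≫ T.map g ≫ M.a) ≫ f.f = 𝟙 N.A
        calc (σ ≫ T.map g ≫ M.a) ≫ f.f
            = σ ≫ T.map g ≫ (M.a ≫ f.f) := by simp
          _ = σ ≫ T.map g ≫ T.map f.f ≫ N.a := by rw [← hf]
          _ = σ ≫ T.map (g ≫ f.f) ≫ N.a := by simp [Functor.map_comp]
          _ = σ ≫ N.a := by rw [hg]; simp
          _ = 𝟙 N.A := hσ2
    · -- (ii) → (i)
      intro h M
      obtain ⟨g', hg'⟩ := h (T.free.obj M.A) M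
        ⟨M.a, by exact M.assoc.symm⟩ ⟨T.η.app M.A, M.unit⟩
      refine ⟨g'.f, ?_, ?_⟩
      · have := g'.h
        exact this.symm
      · have := congrArg Monad.Algebra.Hom.f hg'
        exact this
  · constructor
    · -- (i) → (iii)
      intro h M
      obtain ⟨σ, hσ1, hσ2⟩ := h M
      refine ⟨M.A, ⟨M.a, by exact M.assoc.symm⟩,
        ⟨σ, by exact hσ1.symm⟩, ?_⟩
      ext
      exact hσ2
    · -- (iii) → (i)
      intro h M
      exact aux_i_of_iii M (h M)
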